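/- Lemma 1 (divergence of the potential for nonzero central charge): if (χ, a, f, Q) is a solution of system (10) on (0,∞) satisfying condition (C1), and the limit f(0⁺) of f as ρ → 0⁺ is nonzero, then a is unbounded as ρ → 0⁺; in fact |a(ρ)| → ∞ as ρ → 0⁺. -/

import Mathlib

open Real Filter Topology Set

/-- **Lemma 1, divergence of the potential.** For a solution
`(χ, a, f, Q)` of system (10) on `(0,∞)` satisfying condition (C1), if the limit
`f(0⁺)` of `f` as `ρ → 0⁺` is nonzero, then `|a(ρ)| → ∞` as `ρ → 0⁺`. -/
theorem lemma1_potential_unbounded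
    (χ a f Q : ℝ → ℝ) (ε : ℝ) (hε : ε = 1 ∨ ε = -1)
    (hχ : ∀ ρ > (0:ℝ), HasDerivAt χ (a ρ + 1 - Real.cos (χ ρ)) ρ)
    (ha : ∀ ρ > (0:ℝ), HasDerivAt a (-ε * f ρ / ρ ^ 2) ρ)
    (hf : ∀ ρ > (0:ℝ), HasDerivAt f (Q ρ) ρ)
    (hQ : ∀ ρ > (0:ℝ), HasDerivAt Q (-Q ρ * Real.sin (χ ρ)) ρ)
    (hQnn : ∀ ρ > (0:ℝ), 0 ≤ Q ρ)
    -- Condition (C1)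
    (hfbdd : ∃ Mf, ∀ ρ > (0:ℝ), |f ρ| ≤ Mf)
    (hQbdd : ∃ MQ, ∀ ρ > (0:ℝ), |Q ρ| ≤ MQ)
    (hflim : ∃ Lf, Tendsto f atTop (𝓝 Lf))
    (hQlim : ∃ LQ, Tendsto Q atTop (𝓝 LQ))
    (f0 : ℝ) (hf0 : Tendsto f (𝓝[>] (0:ℝ)) (𝓝 f0)) (hf0ne : f0 ≠ 0) :
    Tendsto (fun ρ => |a ρ|) (𝓝[>] (0:ℝ)) atTop := by
  have hεabs : |ε| = 1 := by rcases hε with h | h <;> simp [h]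
  set c : ℝ := |f0| / 2 with hc_def
  have hc : 0 < c := by positivity
  -- find δ such that |f ρ - f0| < c on (0, δ)
  obtain ⟨δ, hδ, hδf⟩ := Metric.tendsto_nhdsWithin_nhds.mp hf0 c hc
  -- sign
  set s : ℝ := if 0 ≤ -ε * f0 then 1 else -1 with hs_def
  have hsabs : |s| = 1 := by
    rw [hs_def]; split_ifs <;> simp
  have hsu : s * (-ε * f0) = |f0| := by
    rw [hs_def]
    split_ifs with h
    · rw [one_mul, ← abs_of_nonneg h, abs_mul, abs_neg, hεabs, one_mul]
    · push_neg at h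
      rw [neg_one_mul, ← abs_of_neg h, abs_mul, abs_neg, hεabs, one_mul]
  -- key lower bound on s * (-ε f ρ) on (0, δ)
  have key : ∀ ρ ∈ Ioo (0:ℝ) δ, c ≤ s * (-ε * f ρ) := by
    intro ρ hρ
    have hd : dist (f ρ) f0 < c := by
      apply hδf (mem_Ioi.mpr hρ.1)
      rw [Real.dist_eq, sub_zero, abs_of_pos hρ.1]; exact hρ.2
    have : s * (-ε * f ρ) = s * (-ε * f0) + s * (-ε) * (f ρ - f0) := by ring
    rw [this, hsu]
    have habs : |s * (-ε) * (f ρ - f0)| ≤ c := by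
      rw [abs_mul, abs_mul, hsabs, abs_neg, hεabs, one_mul, one_mul]
      rw [Real.dist_eq] at hd; linarith
    have := neg_abs_le (s * (-ε) * (f ρ - f0))
    have : -(c) ≤ s * (-ε) * (f ρ - f0) := by linarith
    have h2c : |f0| = 2 * c := by rw [hc_def]; ring
    linarith
  -- the auxiliary function h = s • a + c / ρ is monotone on Ioc 0 δ
  set h : ℝ → ℝ := fun ρ => s * a ρ + c / ρ with hh_def
  have hderiv : ∀ x ∈ Ioo (0:ℝ) δ, HasDerivAt h ((s * (-ε * f x) - c) / x ^ 2) x := by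
    intro x hx
    have hx0 : x ≠ 0 := ne_of_gt hx.1
    have h1 : HasDerivAt (fun ρ => s * a ρ) (s * (-ε * f x / x ^ 2)) x :=
      (ha x hx.1).const_mul s
    have h2 : HasDerivAt (fun ρ : ℝ => c / ρ) (c * (-(x ^ 2)⁻¹)) x := by
      simpa [div_eq_mul_inv] using (hasDerivAt_inv hx0).const_mul c
    have := h1.add h2
    refine this.congr_deriv ?_
    ring
  have hmono : MonotoneOn h (Ioc (0:ℝ) δ) := by
    have hconv : Convex ℝ (Ioc (0:ℝ) δ) := convex_Ioc 0 δ
    have hint : interior (Ioc (0:ℝ) δ) = Ioo 0 δ := interior_Ioc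
    apply monotoneOn_of_deriv_nonneg hconv
    · -- continuity on Ioc
      intro x hx
      have hx0 : (0:ℝ) < x := hx.1
      have h1 : HasDerivAt (fun ρ => s * a ρ) (s * (-ε * f x / x ^ 2)) x :=
        (ha x hx0).const_mul s
      have h2 : HasDerivAt (fun ρ : ℝ => c / ρ) (c * (-(x ^ 2)⁻¹)) x := by
        simpa [div_eq_mul_inv] using (hasDerivAt_inv (ne_of_gt hx0)).const_mul c
      exact ((h1.add h2).continuousAt).continuousWithinAt
    · rw [hint]
      intro x hx
      exact ((hderiv x hx).differentiableAt).differentiableWithinAt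
    · rw [hint]
      intro x hx
      rw [(hderiv x hx).deriv]
      have := key x hx
      have hx2 : (0:ℝ) < x ^ 2 := pow_pos hx.1 2
      apply div_nonneg (by linarith) (le_of_lt hx2)
  -- lower bound on |a ρ|
  set K : ℝ := h δ with hK_def
  have hbound : ∀ ρ ∈ Ioo (0:ℝ) δ, c / ρ - K ≤ |a ρ| := by
    intro ρ hρ
    have h1 : h ρ ≤ h δ := hmono (Ioc_subset_Ioc_right le_rfl ⟨hρ.1, le_of_lt hρ.2⟩)
      ⟨hδ, le_rfl⟩ (le_of_lt hρ.2)
    have h2 : c / ρ - K ≤ -(s * a ρ) := by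
      have h1' : s * a ρ + c / ρ ≤ K := h1
      linarith
    have h3 : -(s * a ρ) ≤ |s * a ρ| := neg_le_abs _
    have h4 : |s * a ρ| = |a ρ| := by rw [abs_mul, hsabs, one_mul]
    linarith
  -- conclude
  have hlim : Tendsto (fun ρ : ℝ => c / ρ - K) (𝓝[>] (0:ℝ)) atTop := by
    have h1 : Tendsto (fun ρ : ℝ => c * ρ⁻¹) (𝓝[>] (0:ℝ)) atTop :=
      Tendsto.const_mul_atTop hc tendsto_inv_nhdsGT_zero
    have h2 := tendsto_atTop_add_const_right _ (-K) h1
    simpa [div_eq_mul_inv, sub_eq_add_neg] using h2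
  apply tendsto_atTop_mono' _ _ hlim
  filter_upwards [Ioo_mem_nhdsGT_of_mem ⟨le_refl (0:ℝ), hδ⟩] with ρ hρ
  exact hbound ρ hρ
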